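/- Let D be the diagonal real 𝒴 × 𝒴 matrix with diagonal entries D(y, y) = √(p(y)). Then the matrix Q̄ := D⁻¹ · Q · D is symmetric and positive semidefinite; in particular Q is similar to a symmetric positive semidefinite matrix. -/

import Mathlib

open MeasureTheory

/-- With `D` the diagonal matrix with entries `√(p y)`, the matrix
`D⁻¹ * Q * D` is symmetric and positive semidefinite; in particular `Q` is
similar to a symmetric positive semidefinite matrix. -/
theorem stmt_1 {Y : Type*} [Fintype Y] [Nonempty Y] [DecidableEq Y]
    {A : Type*} [MeasurableSpace A] (μ : Measure A) [IsProbabilityMeasure μ]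
    (f : Y → A → ℝ)
    (hmeas : ∀ y, Measurable (f y))
    (hnonneg : ∀ y α, 0 ≤ f y α)
    (hsum : ∀ α, ∑ y, f y α = 1)
    (p : Y → ℝ) (hp : ∀ y, p y = ∫ α, f y α ∂μ)
    (hppos : ∀ y, 0 < p y)
    (Q : Matrix Y Y ℝ)
    (hQ : ∀ yt y, Q yt y = (∫ α, f yt α * f y α ∂μ) / p y)
    (D : Matrix Y Y ℝ)
    (hD : D = Matrix.diagonal fun y => Real.sqrt (p y)) :
    (D⁻¹ * Q * D).IsSymm ∧ (D⁻¹ * Q * D).PosSemidef := by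
  have hsq : ∀ y, (0:ℝ) < Real.sqrt (p y) := fun y => Real.sqrt_pos.2 (hppos y)
  -- each f y is bounded by 1
  have hle1 : ∀ y α, f y α ≤ 1 := by
    intro y α
    calc f y α ≤ ∑ z, f z α := Finset.single_le_sum (fun z _ => hnonneg z α) (Finset.mem_univ y)
    _ = 1 := hsum α
  have intF : ∀ i j, Integrable (fun α => f i α * f j α) μ := by
    intro i j
    refine Integrable.mono' (integrable_const 1) (((hmeas i).mul (hmeas j)).aestronglyMeasurable) ?_
    filter_upwards with α
    rw [Real.norm_eq_abs, abs_of_nonneg (mul_nonneg (hnonneg i α) (hnonneg j α))]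
    calc f i α * f j α ≤ 1 * 1 := mul_le_mul (hle1 i α) (hle1 j α) (hnonneg j α) zero_le_one
    _ = 1 := one_mul 1
  -- inverse of D
  have hDinv : D⁻¹ = Matrix.diagonal fun y => (Real.sqrt (p y))⁻¹ := by
    apply Matrix.inv_eq_left_inv
    rw [hD, Matrix.diagonal_mul_diagonal]
    convert Matrix.diagonal_one with y
    exact inv_mul_cancel₀ (hsq y).ne'
  set M : Matrix Y Y ℝ := Matrix.of fun i j =>
    (∫ α, f i α * f j α ∂μ) / (Real.sqrt (p i) * Real.sqrt (p j)) with hM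
  have hEq : D⁻¹ * Q * D = M := by
    ext i j
    rw [hDinv, hD, Matrix.mul_apply]
    simp only [Matrix.diagonal_mul, Matrix.mul_diagonal, Matrix.diagonal_apply]
    rw [Finset.sum_eq_single j]
    · simp only [if_pos rfl, eq_self_iff_true, ↓reduceIte]
      rw [hQ i j, hM]
      simp only [Matrix.of_apply]
      have hi := (hsq i).ne'
      have hj := (hsq j).ne'
      have hpj := (hppos j).ne'
      field_simp
      have h2 : Real.sqrt (p j) * Real.sqrt (p j) = p j := Real.mul_self_sqrt (hppos j).le
      linear_combination (∫ α, f i α * f j α ∂μ) * h2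
    · intro b _ hb; simp [hb]
    · intro h; exact absurd (Finset.mem_univ j) h
  have hsymm : M.IsSymm := by
    ext i j
    simp only [Matrix.transpose_apply, hM, Matrix.of_apply]
    rw [mul_comm (Real.sqrt (p j))]
    congr 1
    exact integral_congr_ae (Filter.Eventually.of_forall fun α => mul_comm _ _)
  refine ⟨hEq ▸ hsymm, hEq ▸ Matrix.posSemidef_iff_dotProduct_mulVec.2 ⟨?_, ?_⟩⟩
  · rw [Matrix.IsHermitian, Matrix.conjTranspose_eq_transpose_of_trivial, hsymm]
  · intro x
    have key : dotProduct (star x) (M.mulVec x)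
        = ∫ α, (∑ i, (x i / Real.sqrt (p i)) * f i α)^2 ∂μ := by
      have int1 : ∀ i j, Integrable (fun α =>
          ((x i / Real.sqrt (p i)) * f i α) * ((x j / Real.sqrt (p j)) * f j α)) μ := by
        intro i j
        have := ((intF i j).const_mul ((x i / Real.sqrt (p i)) * (x j / Real.sqrt (p j))))
        convert this using 1; ext α; ring
      rw [dotProduct]
      have : ∀ α, (∑ i, (x i / Real.sqrt (p i)) * f i α)^2
          = ∑ i, ∑ j, ((x i / Real.sqrt (p i)) * f i α) * ((x j / Real.sqrt (p j)) * f j α) := by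
        intro α
        rw [sq, Finset.sum_mul_sum]
      simp_rw [this]
      rw [integral_finset_sum _ (fun i _ => integrable_finset_sum _ (fun j _ => int1 i j))]
      refine Finset.sum_congr rfl fun i _ => ?_
      rw [integral_finset_sum _ (fun j _ => int1 i j), Matrix.mulVec, dotProduct]
      simp only [star_trivial]
      rw [Finset.mul_sum]
      refine Finset.sum_congr rfl fun j _ => ?_
      have : (fun α => ((x i / Real.sqrt (p i)) * f i α) * ((x j / Real.sqrt (p j)) * f j α))
          = fun α => ((x i / Real.sqrt (p i)) * (x j / Real.sqrt (p j))) * (f i α * f j α) := by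
        ext α; ring
      rw [this, integral_const_mul, hM]
      simp only [Matrix.of_apply]
      field_simp
    rw [key]
    exact integral_nonneg fun α => sq_nonneg _
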